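/- Fix closure scopes C ∈ {none, object, session, explicit} and ordering scopes O ∈ {trivial, object, all} as below, and define readability A ⪯ B between configurations A = (C_A, O_A) and B = (C_B, O_B) by: for every finite labeled causal DAG (M, E, obj, sess) and every strict linear order ≺ on M refining E, every A-admissible cut is B-admissible. Define κ(trivial) = none, κ(object) = object, κ(all) = explicit. Then A ⪯ B if and only if: O_A ≥ O_B in the chain trivial < object < all, and for every finite labeled causal DAG and every message m, deps_{C_B}(m) ⊆ deps_{C_A}(m) ∪ deps_{κ(O_A)}(m). -/

import Mathlib

/-- Closure scopes. -/
inductive CScope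
  | none | object | session | explicit
deriving DecidableEq

/-- Ordering scopes. -/
inductive OScope
  | trivial | object | all
deriving DecidableEq

/-- A finite labeled causal DAG: a finite type of messages with an irreflexive
acyclic edge relation and object/session labels. -/
structure LDag where
  M : Type
  [fin : Fintype M]
  O0 : Type
  S0 : Type
  E : M → M → Prop
  irr : Irreflexive E
  acyc : Irreflexive (Relation.TransGen E)
  obj : M → O0
  sess : M → S0

/-- The closure filters `deps_C`. -/
def LDag.deps (G : LDag) : CScope → G.M → Set G.M
  | .none, _ => ∅
  | .object, m => {m' | G.E m' m ∧ G.obj m' = G.obj m}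
  | .session, m => {m' | G.E m' m ∧ G.sess m' = G.sess m}
  | .explicit, m => {m' | G.E m' m}

/-- Same-class relation of an ordering scope. -/
def LDag.sameClass (G : LDag) : OScope → G.M → G.M → Prop
  | .trivial, a, b => a = b
  | .object, a, b => G.obj a = G.obj b
  | .all, _, _ => True

/-- `V` is closed under the filter `deps_C`. -/
def LDag.closedUnder (G : LDag) (C : CScope) (V : Set G.M) : Prop :=
  ∀ m ∈ V, G.deps C m ⊆ V

/-- `V` is a per-class prefix for the ordering scope `O` w.r.t. `prec`. -/
def LDag.isPrefix (G : LDag) (O : OScope) (prec : G.M → G.M → Prop) (V : Set G.M) : Prop :=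
  ∀ m ∈ V, ∀ m', G.sameClass O m' m → prec m' m → m' ∈ V

/-- A cut `V` is admissible under the configuration `(C, O)` w.r.t. `(E, prec)`. -/
def LDag.admissible (G : LDag) (prec : G.M → G.M → Prop) (C : CScope) (O : OScope)
    (V : Set G.M) : Prop :=
  G.closedUnder C V ∧ G.isPrefix O prec V

/-- `prec` refines the causal order (causal arbitration). -/
def LDag.refines (G : LDag) (prec : G.M → G.M → Prop) : Prop :=
  ∀ m' m, G.E m' m → prec m' m

/-- A configuration is a pair of a closure scope and an ordering scope. -/
abbrev Config := CScope × OScope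

/-- Readability under causal arbitration: every `A`-admissible cut is
`B`-admissible, on every finite labeled causal DAG and every strict linear
order refining the causal edges. -/
def Readable (A B : Config) : Prop :=
  ∀ G : LDag, ∀ prec : G.M → G.M → Prop,
    IsStrictTotalOrder G.M prec → G.refines prec →
    ∀ V : Set G.M, G.admissible prec A.1 A.2 V → G.admissible prec B.1 B.2 V

/-- The chain `trivial < object < all` on ordering scopes, as a rank. -/
def OScope.rank : OScope → ℕ
  | .trivial => 0
  | .object => 1
  | .all => 2

/-- The κ map: the closure entailed by an ordering scope. -/
def kappa : OScope → CScope
  | .trivial => .none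
  | .object => .object
  | .all => .explicit

/-- A two-point labeled DAG on `Bool`, with an edge `false → true` iff `e = true`. -/
def mk2 (O0 S0 : Type) (e : Bool) (o : Bool → O0) (s : Bool → S0) : LDag where
  M := Bool
  O0 := O0
  S0 := S0
  E := fun a b => e = true ∧ a = false ∧ b = true
  irr := by rintro a ⟨_, h1, h2⟩; subst h1; exact Bool.noConfusion h2
  acyc := by
    intro a h
    have key : ∀ x y : Bool, Relation.TransGen
        (fun a b : Bool => e = true ∧ a = false ∧ b = true) x y → x = false ∧ y = true := by
      intro x y h
      induction h with
      | single h => exact ⟨h.2.1, h.2.2⟩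
      | tail _ h ih => exact ⟨ih.1, h.2.2⟩
    have h2 := key a a h
    rw [h2.1] at h2
    exact Bool.noConfusion h2.2
  obj := o
  sess := s

lemma mk2_closed (O0 S0 : Type) (o : Bool → O0) (s : Bool → S0) (C : CScope)
    (V : Set Bool) : (mk2 O0 S0 false o s).closedUnder C V := by
  intro m _ m' hm'
  cases C <;> simp [LDag.deps, mk2] at hm' <;> exact False.elim hm'

lemma mk2_refines (O0 S0 : Type) (e : Bool) (o : Bool → O0) (s : Bool → S0) :
    (mk2 O0 S0 e o s).refines (fun a b : Bool => a < b) := by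
  rintro a b ⟨_, h1, h2⟩
  subst h1; subst h2; decide

/-- **Readability rule.** Under causal arbitration,
`A ⪯ B` iff `O_A ≥ O_B` in the chain `trivial < object < all` and, on every
finite labeled causal DAG and every message `m`,
`deps_{C_B}(m) ⊆ deps_{C_A}(m) ∪ deps_{κ(O_A)}(m)`. -/
theorem readability_rule (A B : Config) :
    Readable A B ↔
      (B.2.rank ≤ A.2.rank ∧
        ∀ G : LDag, ∀ m : G.M,
          G.deps B.1 m ⊆ G.deps A.1 m ∪ G.deps (kappa A.2) m) := by
  obtain ⟨CA, OA⟩ := A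
  obtain ⟨CB, OB⟩ := B
  constructor
  · intro h
    constructor
    · -- ordering scope ranks
      by_contra hr
      have key : ∀ (O0 S0 : Type) (o : Bool → O0) (s : Bool → S0),
          (∀ V : Set Bool, (mk2 O0 S0 false o s).isPrefix OA (fun a b : Bool => a < b) V) →
          ¬ (mk2 O0 S0 false o s).isPrefix OB (fun a b : Bool => a < b) {b : Bool | b = true} →
          False := by
        intro O0 S0 o s hpreA hpreB
        have hAdm : (mk2 O0 S0 false o s).admissible (fun a b : Bool => a < b) CA OA
            {b : Bool | b = true} := ⟨mk2_closed O0 S0 o s CA _, hpreA _⟩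
        have hB := h (mk2 O0 S0 false o s) (fun a b : Bool => a < b)
          (inferInstance : IsStrictTotalOrder Bool (fun a b : Bool => a < b))
          (mk2_refines O0 S0 false o s) _ hAdm
        exact hpreB hB.2
      cases OA <;> cases OB <;> simp [OScope.rank] at hr
      · -- trivial / object
        refine key Unit Unit (fun _ => ()) (fun _ => ()) ?_ ?_
        · intro V x hx y hsc _
          have : y = x := hsc
          rwa [this]
        · intro hpre
          have := hpre true rfl false rfl (by decide)
          exact Bool.noConfusion this
      · -- trivial / all
        refine key Unit Unit (fun _ => ()) (fun _ => ()) ?_ ?_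
        · intro V x hx y hsc _
          have : y = x := hsc
          rwa [this]
        · intro hpre
          have := hpre true rfl false trivial (by decide)
          exact Bool.noConfusion this
      · -- object / all
        refine key Bool Bool id id ?_ ?_
        · intro V x hx y hsc _
          have : y = x := hsc
          rwa [this]
        · intro hpre
          have := hpre true rfl false trivial (by decide)
          exact Bool.noConfusion this
    · -- dependency inclusion
      intro G m m' hm'
      by_contra hnot
      simp only [Set.mem_union, not_or] at hnot
      obtain ⟨hA1, hK⟩ := hnot
      have hE : G.E m' m := by
        cases CB with
        | none => simp [LDag.deps] at hm'
        | object => exact hm'.1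
        | session => exact hm'.1
        | explicit => exact hm'
      have hCAe : CA ≠ .explicit := by rintro rfl; exact hA1 hE
      have hOAa : OA ≠ .all := by rintro rfl; exact hK hE
      have hobjA : CA = .object → G.obj m' ≠ G.obj m := by
        rintro rfl hlab; exact hA1 ⟨hE, hlab⟩
      have hsessA : CA = .session → G.sess m' ≠ G.sess m := by
        rintro rfl hlab; exact hA1 ⟨hE, hlab⟩
      have hobjO : OA = .object → G.obj m' ≠ G.obj m := by
        rintro rfl hlab; exact hK ⟨hE, hlab⟩
      set G2 : LDag := mk2 G.O0 G.S0 true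
        (fun b => G.obj (cond b m m')) (fun b => G.sess (cond b m m')) with hG2
      have hAdm : G2.admissible (fun a b : Bool => a < b) CA OA {b : Bool | b = true} := by
        constructor
        · intro x hx y hy
          have hx' : x = true := hx
          subst hx'
          cases CA with
          | none => simp [hG2, mk2, LDag.deps] at hy
          | object =>
            obtain ⟨⟨_, hyf, _⟩, hlab⟩ := hy
            subst hyf
            exact absurd hlab (hobjA rfl)
          | session =>
            obtain ⟨⟨_, hyf, _⟩, hlab⟩ := hy
            subst hyf
            exact absurd hlab (hsessA rfl)
          | explicit => exact absurd rfl hCAe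
        · cases OA with
          | trivial =>
            intro x hx y hsc _
            have : y = x := hsc
            rwa [this]
          | object =>
            intro x hx y hsc hp
            have hx' : x = true := hx
            subst hx'
            cases y with
            | true => exact absurd hp (lt_irrefl _)
            | false => exact absurd hsc (hobjO rfl)
          | all => exact absurd rfl hOAa
      have hB := h G2 (fun a b : Bool => a < b)
        (inferInstance : IsStrictTotalOrder Bool (fun a b : Bool => a < b))
        (mk2_refines G.O0 G.S0 true _ _) _ hAdm
      have hdep : (false : Bool) ∈ G2.deps CB true := by
        cases CB with
        | none => simp [LDag.deps] at hm'
        | object => exact ⟨⟨rfl, rfl, rfl⟩, hm'.2⟩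
        | session => exact ⟨⟨rfl, rfl, rfl⟩, hm'.2⟩
        | explicit => exact ⟨rfl, rfl, rfl⟩
      have hfv := hB.1 true rfl hdep
      exact Bool.noConfusion hfv
  · rintro ⟨hr, hsub⟩
    intro G prec hsto href V hadm
    obtain ⟨hcl, hpre⟩ := hadm
    constructor
    · intro m hm m' hm'
      rcases hsub G m hm' with hd | hd
      · exact hcl m hm hd
      · cases OA with
        | trivial => simp [kappa, LDag.deps] at hd
        | object => exact hpre m hm m' hd.2 (href _ _ hd.1)
        | all => exact hpre m hm m' trivial (href _ _ hd)
    · intro m hm m' hsc hp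
      cases OB with
      | trivial =>
        have : m' = m := hsc
        rwa [this]
      | object =>
        cases OA with
        | trivial => simp [OScope.rank] at hr
        | object => exact hpre m hm m' hsc hp
        | all => exact hpre m hm m' trivial hp
      | all =>
        cases OA with
        | trivial => simp [OScope.rank] at hr
        | object => simp [OScope.rank] at hr
        | all => exact hpre m hm m' trivial hp
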